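/- In the hyperbolic two-circle triangle, let Area = Θ − θ_i − θ_j denote its area (by Gauss–Bonnet). If cosh l > 2, then sinh r_i · ∂(Area − θ_j)/∂r_i > 0. -/

import Mathlib

set_option maxHeartbeats 1000000


open Real

noncomputable def arcosh (x : ℝ) : ℝ := Real.log (x + Real.sqrt (x ^ 2 - 1))

/-- cosh of the side opposite the apex in the hyperbolic two-circle triangle. -/
noncomputable def hC (Θ ri rj : ℝ) : ℝ :=
  Real.cosh ri * Real.cosh rj + Real.sinh ri * Real.sinh rj * Real.cos Θ

noncomputable def hL (Θ ri rj : ℝ) : ℝ := _root_.arcosh (hC Θ ri rj)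

/-- Inner angle at vertex `i` of the hyperbolic triangle with side lengths `ri, rj`
adjacent to the apex angle `π − Θ`, via the hyperbolic law of cosines. -/
noncomputable def hθi (Θ ri rj : ℝ) : ℝ :=
  Real.arccos ((Real.cosh ri * Real.cosh (hL Θ ri rj) - Real.cosh rj) /
    (Real.sinh ri * Real.sinh (hL Θ ri rj)))

noncomputable def hθj (Θ ri rj : ℝ) : ℝ :=
  Real.arccos ((Real.cosh rj * Real.cosh (hL Θ ri rj) - Real.cosh ri) /
    (Real.sinh rj * Real.sinh (hL Θ ri rj)))

/-- Area of the hyperbolic two-circle triangle by Gauss–Bonnet. -/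
noncomputable def hArea (Θ ri rj : ℝ) : ℝ := Θ - hθi Θ ri rj - hθj Θ ri rj

lemma cosh_arcosh {y : ℝ} (hy : 1 ≤ y) : Real.cosh (_root_.arcosh y) = y := by
  have hw2 : Real.sqrt (y ^ 2 - 1) ^ 2 = y ^ 2 - 1 := Real.sq_sqrt (by nlinarith)
  have hw0 : 0 ≤ Real.sqrt (y ^ 2 - 1) := Real.sqrt_nonneg _
  have hz : 0 < y + Real.sqrt (y ^ 2 - 1) := by linarith
  have hinv : (y + Real.sqrt (y ^ 2 - 1))⁻¹ = y - Real.sqrt (y ^ 2 - 1) :=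
    inv_eq_of_mul_eq_one_right (by nlinarith)
  rw [_root_.arcosh, Real.cosh_eq, Real.exp_neg, Real.exp_log hz, hinv]; ring

lemma sinh_arcosh {y : ℝ} (hy : 1 ≤ y) : Real.sinh (_root_.arcosh y) = Real.sqrt (y ^ 2 - 1) := by
  have hw2 : Real.sqrt (y ^ 2 - 1) ^ 2 = y ^ 2 - 1 := Real.sq_sqrt (by nlinarith)
  have hw0 : 0 ≤ Real.sqrt (y ^ 2 - 1) := Real.sqrt_nonneg _
  have hz : 0 < y + Real.sqrt (y ^ 2 - 1) := by linarith
  have hinv : (y + Real.sqrt (y ^ 2 - 1))⁻¹ = y - Real.sqrt (y ^ 2 - 1) :=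
    inv_eq_of_mul_eq_one_right (by nlinarith)
  rw [_root_.arcosh, Real.sinh_eq, Real.exp_neg, Real.exp_log hz, hinv]; ring

noncomputable def fC (b tk x : ℝ) : ℝ := Real.cosh x * b + Real.sinh x * tk
noncomputable def fD (b tk x : ℝ) : ℝ := Real.sinh x * b + Real.cosh x * tk
noncomputable def fE (t bk x : ℝ) : ℝ := Real.cosh x * t + Real.sinh x * bk
noncomputable def fQ (b tk x : ℝ) : ℝ := Real.sqrt (fC b tk x ^ 2 - 1)

lemma hC_gt_one {Θ x rj : ℝ} (hx : 0 < x) (hrj : 0 < rj) (hk : -1 < Real.cos Θ) :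
    1 < hC Θ x rj := by
  have h1 : 1 ≤ Real.cosh (x - rj) := Real.one_le_cosh _
  have h2 : Real.cosh (x - rj) = Real.cosh x * Real.cosh rj - Real.sinh x * Real.sinh rj :=
    Real.cosh_sub x rj
  have h3 : 0 < Real.sinh x := Real.sinh_pos_iff.2 hx
  have h4 : 0 < Real.sinh rj := Real.sinh_pos_iff.2 hrj
  unfold hC
  nlinarith [mul_pos (mul_pos h3 h4) (show (0:ℝ) < 1 + Real.cos Θ by linarith)]

lemma sq_pos_of_one_lt {x : ℝ} (h : 1 < x) : 0 < x ^ 2 - 1 := by nlinarith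

theorem hyperbolic_area_minus_angle_derivative_pos
    (ri rj Θ : ℝ) (hri : 0 < ri) (hrj : 0 < rj)
    (hΘ : Θ ∈ Set.Ioo 0 π)
    (hcosh : 2 < Real.cosh (hL Θ ri rj)) :
    0 < Real.sinh ri * deriv (fun x => hArea Θ x rj - hθj Θ x rj) ri := by
  obtain ⟨hΘ0, hΘπ⟩ := hΘ
  have hsin : 0 < Real.sin Θ := Real.sin_pos_of_pos_of_lt_pi hΘ0 hΘπ
  have hs2 : Real.sin Θ ^ 2 = 1 - Real.cos Θ ^ 2 := Real.sin_sq Θ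
  have hk1 : -1 < Real.cos Θ := by nlinarith
  have hk2 : Real.cos Θ < 1 := by nlinarith
  set b := Real.cosh rj with hbdef
  set t := Real.sinh rj with htdef
  set k := Real.cos Θ with hkdef
  set a := Real.cosh ri with hadef
  set s := Real.sinh ri with hsdef
  have ht : 0 < t := Real.sinh_pos_iff.2 hrj
  have hs : 0 < s := Real.sinh_pos_iff.2 hri
  have ha2 : a ^ 2 = s ^ 2 + 1 := Real.cosh_sq ri
  have hb2 : b ^ 2 = t ^ 2 + 1 := Real.cosh_sq rj
  set c := fC b (t * k) ri with hcdef
  set d := fD b (t * k) ri with hddef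
  set e := fE t (b * k) ri with hedef
  set q := fQ b (t * k) ri with hqdef
  have hcval : c = a * b + s * (t * k) := by rw [hcdef]; unfold fC; ring
  have hdval : d = s * b + a * (t * k) := by rw [hddef]; unfold fD; ring
  have heval : e = a * t + s * (b * k) := by rw [hedef]; unfold fE; ring
  have hCfri : hC Θ ri rj = c := by rw [hcval]; unfold hC; ring
  have hc1 : 1 < c := hCfri ▸ hC_gt_one hri hrj hk1
  have hc1' : 1 < fC b (t * k) ri := hcdef ▸ hc1
  have hc2 : 2 < c := by
    rw [hL, hCfri, _root_.cosh_arcosh hc1.le] at hcosh; exact hcosh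
  have hq2 : q ^ 2 = c ^ 2 - 1 := by
    rw [hqdef]; unfold fQ; rw [Real.sq_sqrt (sq_pos_of_one_lt hc1').le]
  have hq : 0 < q := by
    rw [hqdef]; unfold fQ
    exact Real.sqrt_pos.2 (sq_pos_of_one_lt hc1')
  have hQD : q ^ 2 - d ^ 2 = (t * Real.sin Θ) ^ 2 := by
    rw [hq2, hcval, hdval]
    linear_combination (b^2 - t^2*k^2) * ha2 + hb2 + (-(t^2)) * hs2
  have hQE : q ^ 2 - e ^ 2 = (s * Real.sin Θ) ^ 2 := by
    rw [hq2, hcval, heval]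
    linear_combination (b^2 - t^2) * ha2 + (1 + s^2 - s^2*k^2) * hb2 + (-(s^2)) * hs2
  have hI3 : (s * t + a * (b * k)) * q ^ 2 - e * (c * d) = -(s * t * Real.sin Θ ^ 2) := by
    rw [hq2, hcval, hdval, heval]
    linear_combination (s*b^2*t*k^2 - s*t^3*k^2 + a*b^3*k - a*b*t^2*k) * ha2 +
      (s*t*k^2 + a*b*k) * hb2 + (s*t) * hs2
  have hsq1 : Real.sqrt (1 - (d / q) ^ 2) = t * Real.sin Θ / q := by
    have h : 1 - (d / q) ^ 2 = (t * Real.sin Θ / q) ^ 2 := by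
      field_simp; linear_combination hQD
    rw [h, Real.sqrt_sq (by positivity)]
  have hsq2 : Real.sqrt (1 - (e / q) ^ 2) = s * Real.sin Θ / q := by
    have h : 1 - (e / q) ^ 2 = (s * Real.sin Θ / q) ^ 2 := by
      field_simp; linear_combination hQE
    rw [h, Real.sqrt_sq (by positivity)]
  have habs1 : (d / q) ^ 2 < 1 := by
    have h1 : 0 < (t * Real.sin Θ / q) ^ 2 := by positivity
    have h2 : 1 - (d / q) ^ 2 = (t * Real.sin Θ / q) ^ 2 := by
      field_simp; linear_combination hQD
    linarith
  have habs2 : (e / q) ^ 2 < 1 := by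
    have h1 : 0 < (s * Real.sin Θ / q) ^ 2 := by positivity
    have h2 : 1 - (e / q) ^ 2 = (s * Real.sin Θ / q) ^ 2 := by
      field_simp; linear_combination hQE
    linarith
  have hd1 : d / q ≠ -1 := by intro h; rw [h] at habs1; norm_num at habs1
  have hd1' : d / q ≠ 1 := by intro h; rw [h] at habs1; norm_num at habs1
  have he1 : e / q ≠ -1 := by intro h; rw [h] at habs2; norm_num at habs2
  have he1' : e / q ≠ 1 := by intro h; rw [h] at habs2; norm_num at habs2
  -- derivatives
  have hDer : HasDerivAt (fC b (t * k)) d ri := by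
    rw [hdval]
    exact ((Real.hasDerivAt_cosh ri).mul_const b).add ((Real.hasDerivAt_sinh ri).mul_const (t * k))
  have hq2ne : fC b (t * k) ri ^ 2 - 1 ≠ 0 := (sq_pos_of_one_lt hc1').ne'
  have hQder : HasDerivAt (fQ b (t * k)) (c * d / q) ri := by
    have h := ((hDer.pow 2).sub_const 1).sqrt hq2ne
    have hval : (↑2 * fC b (t * k) ri ^ (2 - 1) * d) / (2 * Real.sqrt (fC b (t * k) ri ^ 2 - 1))
        = c * d / q := by
      rw [← hcdef, show Real.sqrt (c ^ 2 - 1) = q by rw [hqdef]; unfold fQ; rw [hcdef]]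
      norm_num
      ring
    exact hval ▸ h
  have hDder : HasDerivAt (fD b (t * k)) c ri := by
    rw [hcval]
    exact ((Real.hasDerivAt_sinh ri).mul_const b).add ((Real.hasDerivAt_cosh ri).mul_const (t * k))
  have hEder : HasDerivAt (fE t (b * k)) (s * t + a * (b * k)) ri :=
    ((Real.hasDerivAt_cosh ri).mul_const t).add ((Real.hasDerivAt_sinh ri).mul_const (b * k))
  have hu : HasDerivAt (fun x => fD b (t * k) x / fQ b (t * k) x)
      ((c * q - d * (c * d / q)) / q ^ 2) ri := hDder.div hQder hq.ne'
  have hv : HasDerivAt (fun x => fE t (b * k) x / fQ b (t * k) x)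
      (((s * t + a * (b * k)) * q - e * (c * d / q)) / q ^ 2) ri := hEder.div hQder hq.ne'
  have hA : HasDerivAt (fun x => Real.arccos (fD b (t * k) x / fQ b (t * k) x))
      (-(c * t * Real.sin Θ / q ^ 2)) ri := by
    have h : HasDerivAt (fun x => Real.arccos (fD b (t * k) x / fQ b (t * k) x))
        (-(1 / Real.sqrt (1 - (d / q) ^ 2)) * ((c * q - d * (c * d / q)) / q ^ 2)) ri :=
      (Real.hasDerivAt_arccos hd1 hd1').comp (h₂ := Real.arccos) ri hu
    have hval : -(1 / Real.sqrt (1 - (d / q) ^ 2)) * ((c * q - d * (c * d / q)) / q ^ 2)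
        = -(c * t * Real.sin Θ / q ^ 2) := by
      rw [hsq1]
      field_simp
      linear_combination (-1) * hQD
    exact hval ▸ h
  have hB : HasDerivAt (fun x => Real.arccos (fE t (b * k) x / fQ b (t * k) x))
      (t * Real.sin Θ / q ^ 2) ri := by
    have h : HasDerivAt (fun x => Real.arccos (fE t (b * k) x / fQ b (t * k) x))
        (-(1 / Real.sqrt (1 - (e / q) ^ 2)) * (((s * t + a * (b * k)) * q - e * (c * d / q)) / q ^ 2)) ri :=
      (Real.hasDerivAt_arccos he1 he1').comp (h₂ := Real.arccos) ri hv
    have hval : -(1 / Real.sqrt (1 - (e / q) ^ 2)) * (((s * t + a * (b * k)) * q - e * (c * d / q)) / q ^ 2)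
        = t * Real.sin Θ / q ^ 2 := by
      rw [hsq2]
      field_simp
      linear_combination (-1) * hI3
    exact hval ▸ h
  set g : ℝ → ℝ := fun x => Θ - Real.arccos (fD b (t * k) x / fQ b (t * k) x) -
      2 * Real.arccos (fE t (b * k) x / fQ b (t * k) x) with hgdef
  have heq : (fun x => hArea Θ x rj - hθj Θ x rj) =ᶠ[nhds ri] g := by
    filter_upwards [eventually_gt_nhds hri] with x hx
    have hCx : 1 < hC Θ x rj := hC_gt_one hx hrj hk1
    have hCfx : hC Θ x rj = fC b (t * k) x := by unfold hC fC; ring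
    have hsx : Real.sinh x ≠ 0 := (Real.sinh_pos_iff.2 hx).ne'
    have hcoshL : Real.cosh (hL Θ x rj) = fC b (t * k) x := by
      rw [hL, _root_.cosh_arcosh hCx.le, hCfx]
    have hsinhL : Real.sinh (hL Θ x rj) = fQ b (t * k) x := by
      rw [hL, _root_.sinh_arcosh hCx.le, hCfx]; rfl
    have e1 : (Real.cosh x * Real.cosh (hL Θ x rj) - Real.cosh rj) /
        (Real.sinh x * Real.sinh (hL Θ x rj)) = fD b (t * k) x / fQ b (t * k) x := by
      rw [hcoshL, hsinhL]
      have hnum : Real.cosh x * fC b (t * k) x - b = Real.sinh x * fD b (t * k) x := by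
        unfold fC fD; linear_combination b * Real.cosh_sq x
      rw [← hbdef, hnum, mul_div_mul_left _ _ hsx]
    have e2 : (Real.cosh rj * Real.cosh (hL Θ x rj) - Real.cosh x) /
        (Real.sinh rj * Real.sinh (hL Θ x rj)) = fE t (b * k) x / fQ b (t * k) x := by
      rw [hcoshL, hsinhL]
      have hnum : b * fC b (t * k) x - Real.cosh x = t * fE t (b * k) x := by
        unfold fC fE; linear_combination Real.cosh x * Real.cosh_sq rj
      rw [← hbdef, ← htdef, hnum, mul_div_mul_left _ _ ht.ne']
    simp only [hArea, hθi, hθj, hgdef, e1, e2]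
    ring
  rw [heq.deriv_eq]
  have hg : HasDerivAt g (0 - -(c * t * Real.sin Θ / q ^ 2) - 2 * (t * Real.sin Θ / q ^ 2)) ri := by
    rw [hgdef]
    exact ((hasDerivAt_const ri Θ).sub hA).sub (hB.const_mul 2)
  rw [hg.deriv]
  have hrw : s * (0 - -(c * t * Real.sin Θ / q ^ 2) - 2 * (t * Real.sin Θ / q ^ 2))
      = s * t * Real.sin Θ * (c - 2) / q ^ 2 := by ring
  rw [hrw]
  exact div_pos (mul_pos (mul_pos (mul_pos hs ht) hsin) (sub_pos.2 hc2)) (by positivity)
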